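/- Loop rule for upper bounds (Park induction for the characteristic function): for every post-expectation E : Σ → ℝ≥0∞ and every expectation I : Σ → ℝ≥0∞ with Φ_E I ≤ I pointwise, the weakest pre-expectation of the loop is bounded by I: lfp Φ_E ≤ I pointwise; hence by the identification of lfp Φ_E with the expected value of E over the loop's output sub-distribution, ∑' τ, W σ τ * E τ ≤ I σ for every σ. -/

import Mathlib

open ENNReal

/-- The characteristic function of the loop `while G do body` with respect to
post-expectation `E`. -/
noncomputable def Phi {S : Type*} (G : S → Prop) [DecidablePred G] (body : S → PMF S)
    (E : S → ℝ≥0∞) (X : S → ℝ≥0∞) : S → ℝ≥0∞ :=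
  fun σ => if G σ then ∑' τ, body σ τ * X τ else E σ

theorem Phi_monotone {S : Type*} (G : S → Prop) [DecidablePred G] (body : S → PMF S)
    (E : S → ℝ≥0∞) : Monotone (Phi G body E) := by
  intro X Y hXY σ
  simp only [Phi]
  split
  · exact ENNReal.tsum_le_tsum fun τ => by have h := hXY τ; gcongr
  · exact le_rfl

/-- The characteristic function, bundled as a monotone map on the complete
lattice of expectations. -/
noncomputable def PhiHom {S : Type*} (G : S → Prop) [DecidablePred G] (body : S → PMF S)
    (E : S → ℝ≥0∞) : (S → ℝ≥0∞) →o (S → ℝ≥0∞) :=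
  ⟨Phi G body E, Phi_monotone G body E⟩

/-- The stopped `n`-step kernels of the loop `while G do body`. -/
noncomputable def mu {S : Type*} (G : S → Prop) [DecidablePred G] [DecidableEq S]
    (body : S → PMF S) : ℕ → S → S → ℝ≥0∞
  | 0 => fun σ τ => if ¬ G σ ∧ τ = σ then 1 else 0
  | n + 1 => fun σ =>
      if G σ then (fun τ => ∑' σ', body σ σ' * mu G body n σ' τ) else mu G body 0 σ

/-- The loop's output sub-distribution. -/
noncomputable def W {S : Type*} (G : S → Prop) [DecidablePred G] [DecidableEq S]
    (body : S → PMF S) (σ τ : S) : ℝ≥0∞ :=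
  ⨆ n, mu G body n σ τ


private lemma tsum_iSup_mono' {α : Type*} {f : ℕ → α → ℝ≥0∞} (h : Monotone f) :
    ∑' a, ⨆ n, f n a = ⨆ n, ∑' a, f n a := by
  rw [ENNReal.tsum_eq_iSup_sum]
  simp_rw [ENNReal.finsetSum_iSup_of_monotone (fun a => fun i j hij => h hij a)]
  rw [iSup_comm]
  simp_rw [ENNReal.tsum_eq_iSup_sum]

private lemma mu_succ {S : Type*} (G : S → Prop) [DecidablePred G] [DecidableEq S]
    (body : S → PMF S) (n : ℕ) : mu G body (n+1) = fun σ =>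
      if G σ then (fun τ => ∑' σ', body σ σ' * mu G body n σ' τ) else mu G body 0 σ := by
  ext σ τ
  conv_lhs => rw [mu]

private lemma mu_mono {S : Type*} (G : S → Prop) [DecidablePred G] [DecidableEq S]
    (body : S → PMF S) : ∀ n σ τ, mu G body n σ τ ≤ mu G body (n+1) σ τ := by
  intro n
  induction n with
  | zero =>
    intro σ τ
    simp only [mu]
    by_cases h : G σ
    · simp [h]
    · simp [h]
  | succ n ih =>
    intro σ τ
    rw [mu_succ, mu_succ]
    by_cases h : G σ
    · simp only [if_pos h]
      exact ENNReal.tsum_le_tsum fun σ' => mul_le_mul_right (ih σ' τ) _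
    · simp only [if_neg h]
      exact le_rfl

private lemma mu_bound {S : Type*} (G : S → Prop) [DecidablePred G] [DecidableEq S]
    (body : S → PMF S) (E I : S → ℝ≥0∞) (hI : ∀ σ, Phi G body E I σ ≤ I σ) :
    ∀ n σ, ∑' τ, mu G body n σ τ * E τ ≤ I σ := by
  have base : ∀ σ, ∑' τ, mu G body 0 σ τ * E τ ≤ I σ := by
    intro σ
    have h0 : ∀ τ, τ ≠ σ → mu G body 0 σ τ * E τ = 0 := by
      intro τ hτ
      simp [mu, hτ]
    rw [tsum_eq_single σ h0]
    by_cases h : G σ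
    · simp [mu, h]
    · simpa [mu, h, Phi] using hI σ
  intro n
  induction n with
  | zero => exact base
  | succ n ih =>
    intro σ
    by_cases h : G σ
    · have step : ∑' τ, mu G body (n+1) σ τ * E τ
          = ∑' σ', body σ σ' * ∑' τ, mu G body n σ' τ * E τ := by
        rw [mu_succ]
        simp only [if_pos h]
        calc ∑' τ, (∑' σ', body σ σ' * mu G body n σ' τ) * E τ
            = ∑' τ, ∑' σ', body σ σ' * mu G body n σ' τ * E τ :=
              tsum_congr fun τ => ENNReal.tsum_mul_right.symm
          _ = ∑' σ', ∑' τ, body σ σ' * mu G body n σ' τ * E τ := ENNReal.tsum_comm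
          _ = ∑' σ', body σ σ' * ∑' τ, mu G body n σ' τ * E τ := by
              refine tsum_congr fun σ' => ?_
              rw [← ENNReal.tsum_mul_left]
              exact tsum_congr fun τ => (mul_assoc _ _ _)
      calc ∑' τ, mu G body (n+1) σ τ * E τ
          = ∑' σ', body σ σ' * ∑' τ, mu G body n σ' τ * E τ := step
        _ ≤ ∑' σ', body σ σ' * I σ' :=
            ENNReal.tsum_le_tsum fun σ' => mul_le_mul_right (ih σ') _
        _ = Phi G body E I σ := by simp [Phi, h]
        _ ≤ I σ := hI σ
    · have : mu G body (n+1) σ = mu G body 0 σ := by rw [mu_succ]; simp only [if_neg h]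
      rw [this]; exact base σ

/-- loop rule for upper bounds (Park induction): any pre-fixed
point of the characteristic function upper-bounds the weakest pre-expectation,
and hence the expected value of the post-expectation over the loop's output
sub-distribution. -/
theorem park_induction_upper_bound {S : Type*} [Countable S] [DecidableEq S]
    (G : S → Prop) [DecidablePred G] (body : S → PMF S)
    (E : S → ℝ≥0∞) (I : S → ℝ≥0∞)
    (hI : ∀ σ, Phi G body E I σ ≤ I σ) :
    (∀ σ, OrderHom.lfp (PhiHom G body E) σ ≤ I σ) ∧
    (∀ σ, ∑' τ, W G body σ τ * E τ ≤ I σ) := by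
  constructor
  · intro σ
    exact OrderHom.lfp_le (PhiHom G body E) (fun τ => hI τ) σ
  · intro σ
    have hmono : Monotone (fun n => fun τ => mu G body n σ τ * E τ) := by
      apply monotone_nat_of_le_succ
      intro n τ
      exact mul_le_mul_left (mu_mono G body n σ τ) _
    have : ∑' τ, W G body σ τ * E τ = ⨆ n, ∑' τ, mu G body n σ τ * E τ := by
      simp only [W, ENNReal.iSup_mul]
      exact tsum_iSup_mono' hmono
    rw [this]
    exact iSup_le fun n => mu_bound G body E I hI n σ
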